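/- Let {a_1 (mod d_1), …, a_n (mod d_n)} be a covering system with distinct moduli in which 2, 3, and 6 do not all simultaneously occur among the moduli. Then there exist pairwise distinct primes p_1, …, p_n with p_i dividing 2^{d_i} − 1 for each i. -/

import Mathlib

open Polynomial Finset



-- order of 2 mod a prime dividing Phi_n(2)
lemma order_of_dvd_cyc {p n : ℕ} (hp : p.Prime) (hn : n ≠ 0)
    (h : (p : ℤ) ∣ (cyclotomic n ℤ).eval 2) :
    orderOf (2 : ZMod p) = ordCompl[p] n := by
  haveI : Fact p.Prime := ⟨hp⟩
  set k := n.factorization p with hk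
  set m := ordCompl[p] n with hm
  have hnm : p ^ k * m = n := Nat.ordProj_mul_ordCompl_eq_self n p
  have hpm : ¬ p ∣ m := Nat.not_dvd_ordCompl hp hn
  haveI : NeZero (m : ZMod p) := ⟨by
    rw [Ne, ZMod.natCast_eq_zero_iff]; exact hpm⟩
  have hroot : (cyclotomic (p ^ k * m) (ZMod p)).IsRoot 2 := by
    have : (cyclotomic n (ZMod p)).IsRoot 2 := by
      have := map_cyclotomic_int n (ZMod p)
      rw [IsRoot.def, ← this]
      have h2 : ((2 : ℤ) : ZMod p) = 2 := by push_cast; ring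
      rw [← h2, eval_intCast_map]
      show ((eval 2 (cyclotomic n ℤ) : ℤ) : ZMod p) = 0
      rwa [ZMod.intCast_zmod_eq_zero_iff_dvd]
    rwa [hnm]
  have := (isRoot_cyclotomic_prime_pow_mul_iff_of_charP (p := p) (k := k) (m := m)).mp hroot
  exact (this.eq_orderOf).symm



lemma dvd_two_pow_sub_one {p t : ℕ} (h : orderOf (2 : ZMod p) ∣ t) :
    p ∣ 2 ^ t - 1 := by
  have h1 : (2 : ZMod p) ^ t = 1 := orderOf_dvd_iff_pow_eq_one.mp h
  have : ((2 ^ t - 1 : ℕ) : ZMod p) = 0 := by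
    push_cast [Nat.one_le_two_pow]
    rw [h1]; ring
  exact (ZMod.natCast_eq_zero_iff _ _).mp this

lemma cyc_eval_dvd {n : ℕ} (hn : n ≠ 0) : (cyclotomic n ℤ).eval 2 ∣ 2 ^ n - 1 := by
  have := prod_cyclotomic_eq_X_pow_sub_one (Nat.pos_of_ne_zero hn) ℤ
  have h2 : ∏ d ∈ n.divisors, (cyclotomic d ℤ).eval 2 = 2 ^ n - 1 := by
    rw [← eval_prod, this]; simp
  rw [← h2]
  exact Finset.dvd_prod_of_mem _ (Nat.mem_divisors_self n hn)

lemma sq_not_dvd {p n : ℕ} (hp : p.Prime) (hp2 : p ≠ 2) (hn : 1 < n) (hpn : p ∣ n)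
    (hord : orderOf (2 : ZMod p) ∣ n / p) :
    ¬ ((p : ℤ)^2 ∣ (cyclotomic n ℤ).eval 2) := by
  intro hdvd
  set x : ℤ := 2 ^ (n / p) with hx
  have hnp1 : 1 ≤ n / p := Nat.one_le_div_iff hp.pos |>.mpr (Nat.le_of_dvd (by omega) hpn)
  have hxval : (2:ℤ) ≤ x := by
    calc (2:ℤ) = 2 ^ 1 := by ring
    _ ≤ x := pow_le_pow_right₀ (by norm_num) hnp1
  have hs : (p : ℤ) ∣ x - 1 := by
    have := dvd_two_pow_sub_one (p := p) hord
    have h1 : ((2 ^ (n/p) - 1 : ℕ) : ℤ) = x - 1 := by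
      push_cast [Nat.one_le_two_pow]; ring
    exact h1 ▸ Int.natCast_dvd_natCast.mpr this
  set Q : ℤ := ∑ i ∈ range p, x ^ i with hQ
  have hgeom : (x - 1) * Q = 2 ^ n - 1 := by
    rw [hQ, mul_comm, geom_sum_mul, hx, ← pow_mul, Nat.div_mul_cancel hpn]
  -- cyclotomic n divides Q
  have hcycQ : (cyclotomic n ℤ).eval 2 ∣ Q := by
    have hA : ∏ d ∈ n.divisors, (cyclotomic d ℤ).eval 2 = 2 ^ n - 1 := by
      rw [← eval_prod, prod_cyclotomic_eq_X_pow_sub_one (by omega) ℤ]; simp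
    have hB : ∏ d ∈ (n/p).divisors, (cyclotomic d ℤ).eval 2 = x - 1 := by
      rw [← eval_prod, prod_cyclotomic_eq_X_pow_sub_one (by omega) ℤ]; simp [hx]
    have hsub : (n/p).divisors ⊆ n.divisors :=
      Nat.divisors_subset_of_dvd (by omega) (Nat.div_dvd_of_dvd hpn)
    have hsplit : (∏ d ∈ n.divisors \ (n/p).divisors, (cyclotomic d ℤ).eval 2) *
        ∏ d ∈ (n/p).divisors, (cyclotomic d ℤ).eval 2 = 2 ^ n - 1 := by
      rw [Finset.prod_sdiff hsub, hA]
    have hQeq : Q = ∏ d ∈ n.divisors \ (n/p).divisors, (cyclotomic d ℤ).eval 2 := by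
      have hx1 : x - 1 ≠ 0 := by omega
      apply mul_left_cancel₀ hx1
      rw [hgeom, ← hsplit, hB]; ring
    rw [hQeq]
    apply Finset.dvd_prod_of_mem
    rw [Finset.mem_sdiff]
    refine ⟨Nat.mem_divisors_self n (by omega), fun hmem => ?_⟩
    have := Nat.divisor_le hmem
    have : n / p < n := Nat.div_lt_self (by omega) hp.one_lt
    omega
  -- p^2 divides Q - p leads to contradiction
  have claim : ∀ i : ℕ, (x - 1)^2 ∣ x ^ i - 1 - i * (x - 1) := by
    intro i
    induction i with
    | zero => simp
    | succ i ih =>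
      have hid : x ^ (i+1) - 1 - (↑(i+1) : ℤ) * (x - 1)
          = x * (x ^ i - 1 - i * (x - 1)) + i * (x - 1)^2 := by push_cast; ring
      rw [hid]
      exact dvd_add (Dvd.dvd.mul_left ih x) (dvd_mul_left _ _)
  obtain ⟨u, hu⟩ : ∃ u : ℕ, p - 1 = 2 * u := by
    have := hp.two_le
    rcases hp.eq_two_or_odd' with h | h; · omega
    · obtain ⟨k, hk⟩ := h; exact ⟨k, by omega⟩
  have hgauss : ∑ i ∈ range p, (i : ℤ) = p * u := by
    have h1 := Finset.sum_range_id_mul_two p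
    rw [hu] at h1
    have h2 : p * (2 * u) = 2 * (p * u) := by ring
    rw [h2] at h1
    have hnat : ∑ i ∈ range p, i = p * u := by omega
    rw [← Nat.cast_sum, hnat]; push_cast; ring
  have hQp : (p : ℤ)^2 ∣ Q - p := by
    have hQsplit : Q - p = (∑ i ∈ range p, (x ^ i - 1 - i * (x - 1)))
        + (∑ i ∈ range p, (i:ℤ)) * (x - 1) :=
      calc Q - p = ∑ i ∈ range p, (x ^ i - 1) := by
            rw [Finset.sum_sub_distrib]; simp [hQ]
        _ = ∑ i ∈ range p, ((x ^ i - 1 - i * (x - 1)) + i * (x - 1)) := by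
            apply Finset.sum_congr rfl; intros; ring
        _ = _ := by rw [Finset.sum_add_distrib, Finset.sum_mul]
    rw [hQsplit]
    apply dvd_add
    · apply Finset.dvd_sum
      intro i _
      exact dvd_trans (pow_dvd_pow_of_dvd hs 2) (claim i)
    · rw [hgauss]
      obtain ⟨t, ht⟩ := hs
      rw [ht]
      exact ⟨(u : ℤ) * t, by ring⟩
  have hpQ : (p : ℤ)^2 ∣ Q := dvd_trans hdvd hcycQ
  have : (p : ℤ)^2 ∣ p := by
    have := dvd_sub hpQ hQp
    simpa using this
  have hple : (p:ℤ)^2 ≤ p := Int.le_of_dvd (by exact_mod_cast hp.pos) this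
  have := hp.two_le
  nlinarith [sq_nonneg ((p:ℤ) - 1)]



lemma cyc_pow_eval {p m : ℕ} (hp : p.Prime) :
    ∀ k, 1 ≤ k → ∀ y : ℤ, (cyclotomic (p ^ k * m) ℤ).eval y
      = (cyclotomic (p * m) ℤ).eval (y ^ (p ^ (k - 1))) := by
  intro k
  induction k with
  | zero => omega
  | succ k ih =>
    intro _ y
    rcases Nat.eq_zero_or_pos k with rfl | hk
    · simp
    · have hdvd : p ∣ p ^ k * m := Dvd.dvd.mul_right (dvd_pow_self p (by omega)) m
      have hexp := cyclotomic_expand_eq_cyclotomic hp hdvd ℤ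
      have h1 : p ^ (k + 1) * m = p ^ k * m * p := by ring
      rw [h1, ← hexp, expand_eval, ih hk (y ^ p), ← pow_mul]
      congr 2
      rw [← pow_succ']
      congr 1
      omega

lemma cyc_mul_eval {p m : ℕ} (hp : p.Prime) (hpm : ¬ p ∣ m) (y : ℤ) :
    (cyclotomic (p * m) ℤ).eval y * (cyclotomic m ℤ).eval y
      = (cyclotomic m ℤ).eval (y ^ p) := by
  have := cyclotomic_expand_eq_cyclotomic_mul hp hpm ℤ
  have h := congrArg (eval y) this
  rw [expand_eval, eval_mul] at h
  rw [mul_comm p m, ← h]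

lemma three_t (t : ℕ) (ht : 5 ≤ t) : 3 * t + 4 ≤ 2 ^ t := by
  induction t with
  | zero => omega
  | succ t ih =>
    rcases Nat.lt_or_ge t 5 with h | h
    · interval_cases t <;> simp_all <;> omega
    · have := ih (by omega)
      have : 2 ^ t ≥ 19 := le_trans (by omega) this
      rw [pow_succ]
      omega

-- the key size inequality
lemma size_ineq {p k : ℕ} (hp : p.Prime) (hp2 : p ≠ 2) (hk : 1 ≤ k)
    (hne : ¬ (p = 3 ∧ k = 1)) :
    p * (2 ^ (p ^ (k - 1)) + 1) ≤ 2 ^ (p ^ k) - 1 := by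
  have hp3 : 3 ≤ p := by
    rcases hp.two_le.lt_or_eq with h | h; omega
    omega
  rcases Nat.eq_or_lt_of_le hk with hk1 | hk2
  · -- k = 1
    have hk1 : k = 1 := hk1.symm
    subst hk1
    simp only [pow_one, pow_zero, pow_one, Nat.sub_self]
    have hp5 : 5 ≤ p := by
      rcases Nat.lt_or_ge p 5 with h | h
      · interval_cases p <;> first | (exfalso; revert hp; decide) | omega
      · exact h
    have := three_t p hp5
    norm_num
    omega
  · -- k ≥ 2
    set a := 2 ^ (p ^ (k - 1)) with ha
    have hpk : p ≤ p ^ (k - 1) := by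
      calc p = p ^ 1 := (pow_one p).symm
      _ ≤ p ^ (k - 1) := Nat.pow_le_pow_right hp.pos (by omega)
    have hap : p + 1 ≤ a := by
      calc p + 1 ≤ 2 ^ p := Nat.succ_le_of_lt (Nat.lt_two_pow_self (n := p))
      _ ≤ a := Nat.pow_le_pow_right (by norm_num) hpk
    have hb : 2 ^ (p ^ k) = a ^ p := by
      rw [ha, ← pow_mul]
      congr 1
      rw [← pow_succ]
      congr 1
      omega
    rw [hb]
    have h2 : a ^ 2 ≤ a ^ p := Nat.pow_le_pow_right (by positivity) (by omega)
    have h3 : p * (a + 1) ≤ (a - 1) * (a + 1) := Nat.mul_le_mul_right _ (by omega)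
    have h4 : (a - 1) * (a + 1) = a ^ 2 - 1 := by
      have h5 : 1 ≤ a := by omega
      obtain ⟨c, hc⟩ := Nat.exists_eq_add_of_le h5
      rw [hc]
      have e1 : (1 + c - 1) = c := by omega
      rw [e1]
      have e2 : c * (1 + c + 1) = c ^ 2 + 2 * c := by ring
      have e3 : (1 + c) ^ 2 = c ^ 2 + 2 * c + 1 := by ring
      omega
    omega





lemma cyc_eval_le {m a : ℕ} (ha : 2 ≤ a) :
    (cyclotomic m ℤ).eval (a : ℤ) ≤ ((a : ℤ) + 1) ^ m.totient := by
  have ha1 : (1 : ℝ) < (a : ℝ) := by exact_mod_cast (by omega : 1 < a)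
  have hR := cyclotomic_eval_le_add_one_pow_totient ha1 m
  have heq : (cyclotomic m ℝ).eval (a : ℝ) = (((cyclotomic m ℤ).eval (a : ℤ) : ℤ) : ℝ) := by
    rw [← map_cyclotomic_int m ℝ]
    have h2 : ((a : ℕ) : ℝ) = (((a : ℕ) : ℤ) : ℝ) := by push_cast; ring
    rw [h2, eval_intCast_map]
    rfl
  rw [heq] at hR
  exact_mod_cast hR

lemma bang {n : ℕ} (h1 : 1 < n) (h6 : n ≠ 6) :
    ∃ p : ℕ, p.Prime ∧ orderOf (2 : ZMod p) = n := by
  have hn0 : n ≠ 0 := by omega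
  set E : ℤ := (cyclotomic n ℤ).eval 2 with hE
  have hEpos : 0 < E := cyclotomic_pos' n (by norm_num : (1:ℤ) < 2)
  set N : ℕ := E.natAbs with hN
  have hEN : E = (N : ℤ) := (Int.natAbs_of_nonneg hEpos.le).symm
  have hN1 : 1 < N := by
    have := sub_one_lt_natAbs_cyclotomic_eval (q := 2) h1 (by norm_num)
    show 1 < E.natAbs
    simpa using this
  have hcast : ((2 ^ n - 1 : ℕ) : ℤ) = 2 ^ n - 1 := by
    push_cast [Nat.one_le_two_pow]; ring
  have hNdvd : N ∣ 2 ^ n - 1 := by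
    rw [← Int.natCast_dvd_natCast, hcast, ← hEN]
    exact cyc_eval_dvd hn0
  have hNodd : ¬ 2 ∣ N := by
    intro h2N
    have h2 : 2 ∣ 2 ^ n - 1 := h2N.trans hNdvd
    have h3 : 2 ≤ 2 ^ n := Nat.one_lt_two_pow (by omega)
    have h4 : 2 ∣ 2 ^ n := dvd_pow_self 2 hn0
    omega
  by_cases hA : ∃ q, q.Prime ∧ q ∣ N ∧ ¬ q ∣ n
  · obtain ⟨q, hq, hqN, hqn⟩ := hA
    refine ⟨q, hq, ?_⟩
    have hdvd : (q : ℤ) ∣ E := by rw [hEN]; exact_mod_cast hqN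
    have := order_of_dvd_cyc hq hn0 hdvd
    rwa [Nat.factorization_eq_zero_of_not_dvd hqn, pow_zero, Nat.div_one] at this
  · push_neg at hA
    exfalso
    set p := N.minFac with hpdef
    have hp : p.Prime := Nat.minFac_prime (by omega)
    have hpN : p ∣ N := Nat.minFac_dvd N
    have hpn : p ∣ n := hA p hp hpN
    have hp2 : p ≠ 2 := by rintro h; rw [h] at hpN; exact hNodd hpN
    have hpE : (p : ℤ) ∣ E := by rw [hEN]; exact_mod_cast hpN
    set m := ordCompl[p] n with hm
    set k := n.factorization p with hk
    have hordp : orderOf (2 : ZMod p) = m := order_of_dvd_cyc hp hn0 hpE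
    have hnm : p ^ k * m = n := Nat.ordProj_mul_ordCompl_eq_self n p
    have hpm : ¬ p ∣ m := Nat.not_dvd_ordCompl hp hn0
    have hk1 : 1 ≤ k := hp.factorization_pos_of_dvd hn0 hpn
    have hm0 : m ≠ 0 := (Nat.ordCompl_pos p hn0).ne'
    haveI : Fact p.Prime := ⟨hp⟩
    have hm2 : 2 ≤ m := by
      rcases Nat.lt_or_ge m 2 with h | h
      · exfalso
        have hm1 : m = 1 := by omega
        rw [hm1, orderOf_eq_one_iff] at hordp
        have h0 : ((1 : ℕ) : ZMod p) = 0 := by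
          have h2 : (2 : ZMod p) - 1 = 0 := by rw [hordp]; ring
          rw [Nat.cast_one]
          linear_combination h2
        rw [ZMod.natCast_eq_zero_iff] at h0
        have := Nat.le_of_dvd one_pos h0
        have := hp.two_le
        omega
      · exact h
    have fermat : ∀ q : ℕ, q.Prime → q ≠ 2 → orderOf (2 : ZMod q) ∣ q - 1 := by
      intro q hq hq2
      haveI : Fact q.Prime := ⟨hq⟩
      have h2ne : (2 : ZMod q) ≠ 0 := by
        intro h
        have h' : ((2 : ℕ) : ZMod q) = 0 := by exact_mod_cast h
        rw [ZMod.natCast_eq_zero_iff] at h'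
        exact hq2 ((Nat.prime_dvd_prime_iff_eq hq Nat.prime_two).mp h')
      exact orderOf_dvd_of_pow_eq_one (ZMod.pow_card_sub_one_eq_one h2ne)
    have huniq : ∀ q, q.Prime → q ∣ N → q = p := by
      intro q hq hqN
      by_contra hne
      have hqn : q ∣ n := hA q hq hqN
      have hq2 : q ≠ 2 := by rintro h; rw [h] at hqN; exact hNodd hqN
      have hqE : (q : ℤ) ∣ E := by rw [hEN]; exact_mod_cast hqN
      have hordq : orderOf (2 : ZMod q) = ordCompl[q] n := order_of_dvd_cyc hq hn0 hqE
      have hqp : ¬ p ∣ q := fun h => hne ((Nat.prime_dvd_prime_iff_eq hp hq).mp h).symm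
      have hpq : ¬ q ∣ p := fun h => hne ((Nat.prime_dvd_prime_iff_eq hq hp).mp h)
      have h1' : p ∣ ordCompl[q] n := Nat.dvd_ordCompl_of_dvd_not_dvd hpn hpq
      have h2' : q ∣ m := Nat.dvd_ordCompl_of_dvd_not_dvd hqn hqp
      have hq1 : ordCompl[q] n ∣ q - 1 := by rw [← hordq]; exact fermat q hq hq2
      have hp1 : m ∣ p - 1 := by rw [← hordp]; exact fermat p hp hp2
      have e1 : p ≤ q - 1 :=
        (Nat.le_of_dvd (Nat.ordCompl_pos q hn0) h1').trans
          (Nat.le_of_dvd (by have := hq.two_le; omega) hq1)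
      have e2 : q ≤ p - 1 :=
        (Nat.le_of_dvd (by omega) h2').trans
          (Nat.le_of_dvd (by have := hp.two_le; omega) hp1)
      omega
    have hppow : p * p ^ (k - 1) = p ^ k := by
      rw [← pow_succ']; congr 1; omega
    have hndp : n / p = p ^ (k - 1) * m := by
      have hfac : n = p * (p ^ (k - 1) * m) := by rw [← hnm, ← mul_assoc, hppow]
      rw [hfac, Nat.mul_div_cancel_left _ hp.pos]
    have hmdvd : orderOf (2 : ZMod p) ∣ n / p := by
      rw [hordp, hndp]; exact dvd_mul_left m _
    have hsq := sq_not_dvd hp hp2 h1 hpn hmdvd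
    have hNp : N = p := by
      by_contra hne
      obtain ⟨c, hc⟩ := hpN
      have hc1 : c ≠ 1 := by rintro rfl; rw [mul_one] at hc; exact hne hc
      have hc0 : c ≠ 0 := by rintro rfl; rw [mul_zero] at hc; omega
      have hq := Nat.minFac_prime hc1
      have hcm : c.minFac ∣ N := (Nat.minFac_dvd c).trans ⟨p, by rw [hc]; ring⟩
      have heq := huniq c.minFac hq hcm
      have hpc : p ∣ c := heq ▸ Nat.minFac_dvd c
      have hp2dvd : (p : ℤ)^2 ∣ E := by
        rw [hEN]
        obtain ⟨e, he⟩ := hpc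
        refine ⟨(e : ℤ), ?_⟩
        rw [hc, he]; push_cast; ring
      exact hsq hp2dvd
    -- final size contradiction
    have hEp : E = (p : ℤ) := by rw [hEN, hNp]
    have hk3 : ¬ (p = 3 ∧ k = 1) := by
      rintro ⟨hP3, hK1⟩
      have hp1 : m ∣ p - 1 := by rw [← hordp]; exact fermat p hp hp2
      rw [hP3] at hp1
      have hM2 : m = 2 := by
        have h4 := Nat.le_of_dvd (by norm_num) hp1
        omega
      apply h6
      rw [← hnm, hP3, hK1, hM2]
      norm_num
    set a : ℕ := 2 ^ (p ^ (k - 1)) with ha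
    set b : ℕ := 2 ^ (p ^ k) with hb
    have ha2 : 2 ≤ a := by
      rw [ha]
      calc 2 = 2 ^ 1 := (pow_one 2).symm
      _ ≤ _ := Nat.pow_le_pow_right (by norm_num) (Nat.one_le_pow _ _ hp.pos)
    have hb2 : 2 ≤ b := by
      rw [hb]
      calc 2 = 2 ^ 1 := (pow_one 2).symm
      _ ≤ _ := Nat.pow_le_pow_right (by norm_num) (Nat.one_le_pow _ _ hp.pos)
    have hab : ((a : ℤ)) ^ p = (b : ℤ) := by
      rw [ha, hb]; push_cast; rw [← pow_mul]; congr 1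
      rw [mul_comm, hppow]
    have hid1 : E = (cyclotomic (p * m) ℤ).eval (a : ℤ) := by
      rw [hE, ← hnm, cyc_pow_eval hp k hk1 2]
      congr 1
    have hid2 := cyc_mul_eval hp hpm (a : ℤ)
    rw [← hid1, hEp, hab] at hid2
    -- hid2 : p * eval a (cyclotomic m) = eval b (cyclotomic m)
    have hlow : ((b - 1 : ℕ) : ℤ) ^ m.totient < (cyclotomic m ℤ).eval (b : ℤ) := by
      have hlt := sub_one_pow_totient_lt_natAbs_cyclotomic_eval (n := m) (q := b) hm2 (by omega)
      have hpos : 0 < (cyclotomic m ℤ).eval (b : ℤ) :=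
        cyclotomic_pos' m (by exact_mod_cast (by omega : 1 < b))
      have := (Int.natAbs_of_nonneg hpos.le)
      calc ((b - 1 : ℕ) : ℤ) ^ m.totient = (((b - 1) ^ m.totient : ℕ) : ℤ) := by push_cast; ring
      _ < (((cyclotomic m ℤ).eval (b : ℤ)).natAbs : ℤ) := by exact_mod_cast hlt
      _ = (cyclotomic m ℤ).eval (b : ℤ) := this
    have hup : (cyclotomic m ℤ).eval (a : ℤ) ≤ ((a : ℤ) + 1) ^ m.totient := cyc_eval_le ha2
    have hkeyN : p * (a + 1) ≤ b - 1 := size_ineq hp hp2 hk1 hk3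
    have hkey : (p : ℤ) * ((a : ℤ) + 1) ≤ ((b - 1 : ℕ) : ℤ) := by
      calc (p : ℤ) * ((a : ℤ) + 1) = ((p * (a + 1) : ℕ) : ℤ) := by push_cast; ring
      _ ≤ _ := by exact_mod_cast hkeyN
    have htot : 1 ≤ m.totient := Nat.totient_pos.mpr (by omega)
    have c1 : ((p : ℤ) * ((a : ℤ) + 1)) ^ m.totient ≤ ((b - 1 : ℕ) : ℤ) ^ m.totient :=
      pow_le_pow_left₀ (by positivity) hkey _
    have c2 : ((p : ℤ) * ((a : ℤ) + 1)) ^ m.totient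
        = (p : ℤ) ^ m.totient * ((a : ℤ) + 1) ^ m.totient := mul_pow _ _ _
    have c3 : (p : ℤ) ≤ (p : ℤ) ^ m.totient :=
      le_self_pow₀ (by exact_mod_cast hp.one_lt.le) (by omega)
    have c4 : (p : ℤ) * ((a : ℤ) + 1) ^ m.totient ≤ (p : ℤ) ^ m.totient * ((a : ℤ) + 1) ^ m.totient :=
      mul_le_mul_of_nonneg_right c3 (by positivity)
    have c5 : (cyclotomic m ℤ).eval (b : ℤ) ≤ (p : ℤ) * ((a : ℤ) + 1) ^ m.totient := by
      rw [← hid2]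
      exact mul_le_mul_of_nonneg_left hup (by positivity)
    linarith

theorem cdl_covering_criterion (n : ℕ) (a : Fin n → ℤ) (d : Fin n → ℕ)
    (hd : ∀ i, 1 < d i) (hinj : Function.Injective d)
    (hcov : ∀ k : ℤ, ∃ i, k ≡ a i [ZMOD d i])
    (h236 : ¬ ((∃ i, d i = 2) ∧ (∃ i, d i = 3) ∧ (∃ i, d i = 6))) :
    ∃ p : Fin n → ℕ, Function.Injective p ∧
      ∀ i, (p i).Prime ∧ p i ∣ 2 ^ d i - 1 := by
  obtain ⟨o, hoinj, ho⟩ : ∃ o : Fin n → ℕ,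
      (∀ i j, o i = o j → d i = d j) ∧ ∀ i, 1 < o i ∧ o i ≠ 6 ∧ o i ∣ d i := by
    by_cases h6 : ∃ i, d i = 6
    · by_cases h2 : ∃ i, d i = 2
      · have h3 : ¬ ∃ i, d i = 3 := fun h3 => h236 ⟨h2, h3, h6⟩
        refine ⟨fun i => if d i = 6 then 3 else d i, ?_, ?_⟩
        · intro i j hij
          dsimp only at hij
          by_cases hi : d i = 6 <;> by_cases hj : d j = 6
          · rw [hi, hj]
          · rw [if_pos hi, if_neg hj] at hij; exact absurd ⟨j, hij.symm⟩ h3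
          · rw [if_neg hi, if_pos hj] at hij; exact absurd ⟨i, hij⟩ h3
          · rwa [if_neg hi, if_neg hj] at hij
        · intro i
          dsimp only
          by_cases hi : d i = 6
          · rw [if_pos hi, hi]; norm_num
          · rw [if_neg hi]; exact ⟨hd i, hi, dvd_rfl⟩
      · refine ⟨fun i => if d i = 6 then 2 else d i, ?_, ?_⟩
        · intro i j hij
          dsimp only at hij
          by_cases hi : d i = 6 <;> by_cases hj : d j = 6
          · rw [hi, hj]
          · rw [if_pos hi, if_neg hj] at hij; exact absurd ⟨j, hij.symm⟩ h2
          · rw [if_neg hi, if_pos hj] at hij; exact absurd ⟨i, hij⟩ h2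
          · rwa [if_neg hi, if_neg hj] at hij
        · intro i
          dsimp only
          by_cases hi : d i = 6
          · rw [if_pos hi, hi]; norm_num
          · rw [if_neg hi]; exact ⟨hd i, hi, dvd_rfl⟩
    · exact ⟨d, fun i j h => h, fun i => ⟨hd i, fun h => h6 ⟨i, h⟩, dvd_rfl⟩⟩
  have H : ∀ i, ∃ q : ℕ, q.Prime ∧ orderOf (2 : ZMod q) = o i :=
    fun i => bang (ho i).1 (ho i).2.1
  choose q hq1 hq2 using H
  refine ⟨q, ?_, ?_⟩
  · intro i j hij
    apply hinj
    apply hoinj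
    rw [← hq2 i, ← hq2 j, hij]
  · intro i
    refine ⟨hq1 i, dvd_two_pow_sub_one ?_⟩
    rw [hq2 i]
    exact (ho i).2.2
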